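/- arXiv:2105.12716 — 9 statements merged into one kernel-verified Lean document; each statement's English description precedes it below -/
import Mathlib

section
/- Let n ≥ 3 and p be integers with 1 ≤ p and 2p ≤ n, and let r be a real number with 0 < r < 1 and r² ≥ p/n. Set λ = √(1−r²)/r and μ = −r/√(1−r²), and define S = p·λ² + (n−p)·μ² and H = |p·λ + (n−p)·μ|/n. Then S = a(n,p,H,1). -/
/-- The pinching bound `a(n,p,t,c)` from the paper. -/
noncomputable def pinchA (n p : ℕ) (t c : ℝ) : ℝ :=
  (n : ℝ) * c + (n : ℝ) ^ 3 * t ^ 2 / (2 * (p : ℝ) * ((n : ℝ) - (p : ℝ)))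
    - ((n : ℝ) * |(n : ℝ) - 2 * (p : ℝ)| * t / (2 * (p : ℝ) * ((n : ℝ) - (p : ℝ))))
      * Real.sqrt ((n : ℝ) ^ 2 * t ^ 2 + 4 * (p : ℝ) * ((n : ℝ) - (p : ℝ)) * c)

theorem clifford_torus_S_eq_a (n p : ℕ) (hn : 3 ≤ n) (hp : 1 ≤ p) (hpn : 2 * p ≤ n)
    (r : ℝ) (hr0 : 0 < r) (hr1 : r < 1) (hr2 : (p : ℝ) / (n : ℝ) ≤ r ^ 2) :
    (p : ℝ) * (Real.sqrt (1 - r ^ 2) / r) ^ 2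
      + ((n : ℝ) - (p : ℝ)) * (-(r / Real.sqrt (1 - r ^ 2))) ^ 2
    = pinchA n p
        (|(p : ℝ) * (Real.sqrt (1 - r ^ 2) / r)
            + ((n : ℝ) - (p : ℝ)) * (-(r / Real.sqrt (1 - r ^ 2)))| / (n : ℝ)) 1 := by
  have hn0 : (0:ℝ) < n := by positivity
  have hp0 : (0:ℝ) < p := by exact_mod_cast hp
  have h2p : 2*(p:ℝ) ≤ (n:ℝ) := by exact_mod_cast hpn
  have hpn' : (p:ℝ) < n := by linarith
  have hs : 0 < 1 - r^2 := by nlinarith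
  set q := Real.sqrt (1 - r^2) with hq
  have hq0 : 0 < q := Real.sqrt_pos.mpr hs
  have hq2 : q^2 = 1 - r^2 := Real.sq_sqrt hs.le
  have hr2' : (p:ℝ) ≤ n * r^2 := by rw [div_le_iff₀ hn0] at hr2; nlinarith
  have hA : (p:ℝ)*(q/r) + ((n:ℝ)-p)*(-(r/q)) = ((p:ℝ) - n*r^2)/(r*q) := by
    field_simp
    linear_combination (p:ℝ) * hq2
  have habs : |(p:ℝ)*(q/r) + ((n:ℝ)-p)*(-(r/q))| = ((n:ℝ)*r^2 - p)/(r*q) := by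
    rw [hA, abs_of_nonpos (by
      apply div_nonpos_of_nonpos_of_nonneg (by linarith) (by positivity))]
    ring
  have hT : |(p:ℝ)*(q/r) + ((n:ℝ)-p)*(-(r/q))| / (n:ℝ) = ((n:ℝ)*r^2 - p)/(r*q)/n := by
    rw [habs]
  rw [hT, pinchA]
  have hD : (0:ℝ) < 2*(p:ℝ)*((n:ℝ)-p) := by nlinarith
  have hinn : (n:ℝ)^2 * (((n:ℝ)*r^2 - p)/(r*q)/n)^2 + 4*(p:ℝ)*((n:ℝ)-p)*1
      = ((((n:ℝ)-2*p)*r^2+p)/(r*q))^2 := by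
    field_simp
    linear_combination (4*r^2*(p:ℝ)*((n:ℝ)-(p:ℝ))) * hq2
  rw [hinn, Real.sqrt_sq (by
    apply div_nonneg (by nlinarith) (by positivity)), abs_of_nonneg (by linarith)]
  have hnp : (n:ℝ)-p ≠ 0 := by linarith
  field_simp
  linear_combination (2*(p:ℝ)^2*((n:ℝ)-p)*(q^2+1-r^2) - 2*(n:ℝ)*p*r^2*((n:ℝ)-p)) * hq2
end

section
/- Let n ≥ 3 and p be integers with 1 ≤ p and 2p < n, and let r be a real number with 0 < r < 1 and r² < p/n. Set λ = √(1−r²)/r and μ = −r/√(1−r²), and define S = p·λ² + (n−p)·μ² and H = |p·λ + (n−p)·μ|/n. Then S > a(n,p,H,1). -/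
theorem clifford_torus_S_gt_a (n p : ℕ) (hn : 3 ≤ n) (hp : 1 ≤ p) (hpn : 2 * p < n)
    (r : ℝ) (hr0 : 0 < r) (hr1 : r < 1) (hr2 : r ^ 2 < (p : ℝ) / (n : ℝ)) :
    (p : ℝ) * (Real.sqrt (1 - r ^ 2) / r) ^ 2
      + ((n : ℝ) - (p : ℝ)) * (-(r / Real.sqrt (1 - r ^ 2))) ^ 2
    > pinchA n p
        (|(p : ℝ) * (Real.sqrt (1 - r ^ 2) / r)
            + ((n : ℝ) - (p : ℝ)) * (-(r / Real.sqrt (1 - r ^ 2)))| / (n : ℝ)) 1 := by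
  have hP1 : (1 : ℝ) ≤ (p : ℝ) := by exact_mod_cast hp
  have h2P : 2 * (p : ℝ) < (n : ℝ) := by exact_mod_cast hpn
  set N : ℝ := (n : ℝ) with hNdef
  set P : ℝ := (p : ℝ) with hPdef
  have hP0 : 0 < P := by linarith
  have hN0 : 0 < N := by linarith
  have hNP : 0 < N - P := by linarith
  have hr21 : r ^ 2 < 1 := by nlinarith
  have hs : 0 < 1 - r ^ 2 := by linarith
  set w : ℝ := Real.sqrt (1 - r ^ 2) with hwdef
  have hw2 : w ^ 2 = 1 - r ^ 2 := Real.sq_sqrt (le_of_lt hs)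
  have hw : 0 < w := Real.sqrt_pos.mpr hs
  have hx : N * r ^ 2 < P := by
    have := (lt_div_iff₀ hN0).mp hr2
    linarith
  have hPr : 0 < P - N * r ^ 2 := by linarith
  have hQpos : 0 < P + (N - 2 * P) * r ^ 2 := by nlinarith
  have hrw : 0 < r * w := mul_pos hr0 hw
  have hval : P * (w / r) + (N - P) * (-(r / w)) = (P - N * r ^ 2) / (r * w) := by
    field_simp
    linear_combination P * hw2
  have habs : |P * (w / r) + (N - P) * (-(r / w))| = (P - N * r ^ 2) / (r * w) := by
    rw [hval]
    exact abs_of_pos (div_pos hPr hrw)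
  have habs2 : |N - 2 * P| = N - 2 * P := abs_of_pos (by linarith)
  simp only [pinchA, habs, habs2]
  have hT2 : ((P - N * r ^ 2) / (r * w) / N) ^ 2
      = (P - N * r ^ 2) ^ 2 / (N ^ 2 * r ^ 2 * (1 - r ^ 2)) := by
    rw [div_pow, div_pow, mul_pow, hw2]
    field_simp
  rw [hT2]
  have harg : N ^ 2 * ((P - N * r ^ 2) ^ 2 / (N ^ 2 * r ^ 2 * (1 - r ^ 2)))
      + 4 * P * (N - P) * 1 = ((P + (N - 2 * P) * r ^ 2) / (r * w)) ^ 2 := by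
    rw [div_pow, mul_pow, hw2]
    field_simp
    ring
  rw [harg, Real.sqrt_sq (le_of_lt (div_pos hQpos hrw))]
  have e1 : (r * w * N) * (r * w) = N * (r ^ 2 * (1 - r ^ 2)) := by
    linear_combination (N * r ^ 2) * hw2
  have e2 : (P - N * r ^ 2) / (r * w) / N * ((P + (N - 2 * P) * r ^ 2) / (r * w))
      = ((P - N * r ^ 2) * (P + (N - 2 * P) * r ^ 2)) / (N * (r ^ 2 * (1 - r ^ 2))) := by
    rw [div_div, div_mul_div_comm, e1]
  have e3 : N * (N - 2 * P) * ((P - N * r ^ 2) / (r * w) / N) / (2 * P * (N - P))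
        * ((P + (N - 2 * P) * r ^ 2) / (r * w))
      = (N * (N - 2 * P) / (2 * P * (N - P)))
        * ((P - N * r ^ 2) / (r * w) / N * ((P + (N - 2 * P) * r ^ 2) / (r * w))) := by
    ring
  rw [← hNdef, ← hPdef, habs2]
  rw [e3, e2]
  have h1 : (w / r) ^ 2 = (1 - r ^ 2) / r ^ 2 := by rw [div_pow, hw2]
  have h2 : (-(r / w)) ^ 2 = r ^ 2 / (1 - r ^ 2) := by
    rw [neg_pow, div_pow, hw2]; ring
  rw [h1, h2]
  rw [gt_iff_lt, ← sub_pos]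
  have hnum : 0 < 2 * (N - 2 * P) * (P - N * r ^ 2) * (P + (N - 2 * P) * r ^ 2) := by
    have h3 : 0 < N - 2 * P := by linarith
    positivity
  have hden : 0 < 2 * P * (N - P) * (r ^ 2 * (1 - r ^ 2)) := by positivity
  refine lt_of_lt_of_eq (div_pos hnum hden) ?_
  field_simp
  ring
end

section
/- Let n ≥ 3 and p be integers with 1 ≤ p and 2p ≤ n, and let k₁,…,kₙ be real numbers with tr k = Σᵢ kᵢ ≥ 0. Then for every subset a ⊆ {1,…,n} with |a| = p, one has K_a · K_{⋆a} ≥ (1/4)·(tr k)² − (1/4)·( ((n−2p)/n)·tr k + √(4p(n−p)/n)·‖k̊‖ )². -/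
theorem eigenvalue_lower_bound (n p : ℕ) (hn : 3 ≤ n) (hp : 1 ≤ p) (hpn : 2 * p ≤ n)
    (k : Fin n → ℝ) (htr : 0 ≤ ∑ i, k i)
    (a : Finset (Fin n)) (ha : a.card = p) :
    (∑ i ∈ a, k i) * (∑ i ∈ aᶜ, k i)
      ≥ (1 / 4) * (∑ i, k i) ^ 2
        - (1 / 4) * (((n : ℝ) - 2 * (p : ℝ)) / (n : ℝ) * (∑ i, k i)
            + Real.sqrt (4 * (p : ℝ) * ((n : ℝ) - (p : ℝ)) / (n : ℝ))
              * Real.sqrt (∑ i, (k i - (∑ j, k j) / (n : ℝ)) ^ 2)) ^ 2 := by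
  have hpn' : p ≤ n := le_trans (by omega) hpn
  have hn0 : (0:ℝ) < (n:ℝ) := by exact_mod_cast (by omega : 0 < n)
  have hpR : (p:ℝ) ≤ (n:ℝ) := by exact_mod_cast hpn'
  have h2pR : 2 * (p:ℝ) ≤ (n:ℝ) := by exact_mod_cast hpn
  set T := ∑ i, k i with hT
  set m := T / (n:ℝ) with hm
  set N2 := ∑ i, (k i - m) ^ 2 with hN2
  have hN2nn : (0:ℝ) ≤ N2 := Finset.sum_nonneg fun i _ => sq_nonneg _
  have hNsq : Real.sqrt N2 ^ 2 = N2 := Real.sq_sqrt hN2nn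
  set E := ∑ i ∈ a, (k i - m) with hE
  have hcompl : ∑ i ∈ aᶜ, k i = T - ∑ i ∈ a, k i := by
    have h := Finset.sum_add_sum_compl a k
    rw [← hT] at h; linarith
  have hS : ∑ i ∈ a, k i = E + (p:ℝ) * m := by
    rw [hE, Finset.sum_sub_distrib, Finset.sum_const, ha]
    push_cast [nsmul_eq_mul]
    ring
  have hzero : ∑ i, (k i - m) = 0 := by
    rw [Finset.sum_sub_distrib, Finset.sum_const, ← hT, Finset.card_univ,
      Fintype.card_fin, nsmul_eq_mul, hm]
    field_simp
    simp
  have hEw : E = ∑ i, ((if i ∈ a then (1:ℝ) else 0) - (p:ℝ)/(n:ℝ)) * (k i - m) := by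
    have : ∀ i, ((if i ∈ a then (1:ℝ) else 0) - (p:ℝ)/(n:ℝ)) * (k i - m)
        = (if i ∈ a then (k i - m) else 0) - (p:ℝ)/(n:ℝ) * (k i - m) := by
      intro i; by_cases h : i ∈ a <;> simp [h] <;> ring
    rw [Finset.sum_congr rfl (fun i _ => this i), Finset.sum_sub_distrib,
      ← Finset.mul_sum, hzero, mul_zero, sub_zero, Finset.sum_ite_mem,
      Finset.univ_inter, hE]
  have hW : ∑ i, ((if i ∈ a then (1:ℝ) else 0) - (p:ℝ)/(n:ℝ)) ^ 2
      = (p:ℝ) * ((n:ℝ) - (p:ℝ)) / (n:ℝ) := by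
    rw [← Finset.sum_add_sum_compl a]
    have h1 : ∑ i ∈ a, ((if i ∈ a then (1:ℝ) else 0) - (p:ℝ)/(n:ℝ)) ^ 2
        = (p:ℝ) * (1 - (p:ℝ)/(n:ℝ)) ^ 2 := by
      have he : ∀ i ∈ a, ((if i ∈ a then (1:ℝ) else 0) - (p:ℝ)/(n:ℝ)) ^ 2
          = (1 - (p:ℝ)/(n:ℝ)) ^ 2 := fun i hi => by simp [hi]
      rw [Finset.sum_congr rfl he, Finset.sum_const, ha, nsmul_eq_mul]
    have h2 : ∑ i ∈ aᶜ, ((if i ∈ a then (1:ℝ) else 0) - (p:ℝ)/(n:ℝ)) ^ 2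
        = ((n:ℝ) - (p:ℝ)) * ((p:ℝ)/(n:ℝ)) ^ 2 := by
      have he : ∀ i ∈ aᶜ, ((if i ∈ a then (1:ℝ) else 0) - (p:ℝ)/(n:ℝ)) ^ 2
          = ((p:ℝ)/(n:ℝ)) ^ 2 := fun i hi => by simp [Finset.mem_compl.mp hi]
      rw [Finset.sum_congr rfl he, Finset.sum_const, Finset.card_compl,
        Fintype.card_fin, ha, nsmul_eq_mul, Nat.cast_sub hpn']
    rw [h1, h2]
    field_simp
    ring
  have hWnn : (0:ℝ) ≤ (p:ℝ) * ((n:ℝ) - (p:ℝ)) / (n:ℝ) :=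
    div_nonneg (mul_nonneg p.cast_nonneg (by linarith)) hn0.le
  have hCS : E ^ 2 ≤ ((p:ℝ) * ((n:ℝ) - (p:ℝ)) / (n:ℝ)) * N2 := by
    rw [hEw, ← hW, hN2]
    exact Finset.sum_mul_sq_le_sq_mul_sq _ _ _
  have hc : Real.sqrt (4 * (p:ℝ) * ((n:ℝ) - (p:ℝ)) / (n:ℝ))
      = 2 * Real.sqrt ((p:ℝ) * ((n:ℝ) - (p:ℝ)) / (n:ℝ)) := by
    rw [show 4 * (p:ℝ) * ((n:ℝ) - (p:ℝ)) / (n:ℝ)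
        = 2 ^ 2 * ((p:ℝ) * ((n:ℝ) - (p:ℝ)) / (n:ℝ)) by ring,
      Real.sqrt_mul (by positivity), Real.sqrt_sq (by norm_num)]
  set cN := 2 * Real.sqrt ((p:ℝ) * ((n:ℝ) - (p:ℝ)) / (n:ℝ)) * Real.sqrt N2 with hcN
  have hcNnn : (0:ℝ) ≤ cN :=
    mul_nonneg (mul_nonneg (by norm_num) (Real.sqrt_nonneg _)) (Real.sqrt_nonneg _)
  have h4E : 4 * E ^ 2 ≤ cN ^ 2 := by
    have : cN ^ 2 = 4 * (((p:ℝ) * ((n:ℝ) - (p:ℝ)) / (n:ℝ)) * N2) := by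
      rw [hcN, mul_pow, mul_pow, Real.sq_sqrt hWnn, hNsq]; ring
    rw [this]; linarith
  have h5 : (0:ℝ) ≤ cN + 2 * E := by nlinarith [h4E, hcNnn]
  have h6 : (0:ℝ) ≤ cN - 2 * E := by nlinarith [h4E, hcNnn]
  have hA : ((n:ℝ) - 2 * (p:ℝ)) / (n:ℝ) * T = T - 2 * (p:ℝ) * m := by
    rw [hm]; field_simp
  have hAnn : (0:ℝ) ≤ ((n:ℝ) - 2 * (p:ℝ)) / (n:ℝ) * T := by
    apply mul_nonneg _ htr
    apply div_nonneg (by linarith) (le_of_lt hn0)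
  rw [hcompl, hS, hc, ← hcN]
  set A := ((n:ℝ) - 2 * (p:ℝ)) / (n:ℝ) * T with hAdef
  have hprod : (0:ℝ) ≤ (2 * A + cN - 2 * E) * (cN + 2 * E) :=
    mul_nonneg (by linarith) h5
  have key : 4 * ((E + (p:ℝ) * m) * (T - (E + (p:ℝ) * m))) - (T ^ 2 - (A + cN) ^ 2)
      = (2 * A + cN - 2 * E) * (cN + 2 * E) := by
    rw [hA]; ring
  linarith [hprod, key]
end

section
/- Let n ≥ 2 and p be integers with 1 ≤ p ≤ n−1, and let k₁,…,kₙ be real numbers with Σᵢ kᵢ = 0. Then for every subset a ⊆ {1,…,n} with |a| = p, one has (Σ_{i∈a} kᵢ)² ≤ (p(n−p)/n)·Σ_{i=1}^n kᵢ². -/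
theorem tracefree_partial_sum_sq_bound (n p : ℕ) (hn : 2 ≤ n) (hp : 1 ≤ p) (hpn : p ≤ n - 1)
    (k : Fin n → ℝ) (htr : ∑ i, k i = 0)
    (a : Finset (Fin n)) (ha : a.card = p) :
    (∑ i ∈ a, k i) ^ 2 ≤ ((p : ℝ) * ((n : ℝ) - (p : ℝ)) / (n : ℝ)) * ∑ i, (k i) ^ 2 := by
  set S := ∑ i ∈ a, k i with hS
  have hsplit : S + ∑ i ∈ aᶜ, k i = ∑ i, k i := by
    rw [hS, Finset.sum_add_sum_compl]
  have hcompl : ∑ i ∈ aᶜ, k i = -S := by linarith [hsplit.trans htr]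
  have hsq : ∀ s : Finset (Fin n), (∑ i ∈ s, k i) ^ 2 ≤ s.card * ∑ i ∈ s, k i ^ 2 :=
    fun s => sq_sum_le_card_mul_sum_sq
  have h1 : S ^ 2 ≤ p * ∑ i ∈ a, k i ^ 2 := by
    have := hsq a; rwa [ha] at this
  have hcard : (aᶜ.card : ℝ) = n - p := by
    rw [Finset.card_compl, ha, Fintype.card_fin]
    have : p ≤ n := le_trans hpn (Nat.sub_le n 1)
    push_cast [Nat.cast_sub this]; ring
  have h2 : S ^ 2 ≤ ((n : ℝ) - p) * ∑ i ∈ aᶜ, k i ^ 2 := by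
    have := hsq aᶜ
    rw [hcompl, hcard, neg_pow] at this
    simpa using this
  have hsum : (∑ i ∈ a, k i ^ 2) + ∑ i ∈ aᶜ, k i ^ 2 = ∑ i, k i ^ 2 :=
    Finset.sum_add_sum_compl a _
  have hp' : (1 : ℝ) ≤ p := by exact_mod_cast hp
  have hnp : (1 : ℝ) ≤ (n : ℝ) - p := by
    have : p + 1 ≤ n := by omega
    have : (p : ℝ) + 1 ≤ n := by exact_mod_cast this
    linarith
  have hn' : (0 : ℝ) < n := by positivity
  rw [div_mul_eq_mul_div, le_div_iff₀ hn']
  have h3 : ((n:ℝ) - p) * S ^ 2 ≤ (p:ℝ) * ((n:ℝ) - p) * ∑ i ∈ a, k i ^ 2 := by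
    nlinarith [mul_le_mul_of_nonneg_left h1 (by linarith : (0:ℝ) ≤ (n:ℝ) - p)]
  have h4 : (p:ℝ) * S ^ 2 ≤ (p:ℝ) * ((n:ℝ) - p) * ∑ i ∈ aᶜ, k i ^ 2 := by
    nlinarith [mul_le_mul_of_nonneg_left h2 (by linarith : (0:ℝ) ≤ (p:ℝ))]
  have h5 : (p:ℝ) * ((n:ℝ) - p) * ∑ i ∈ a, k i ^ 2 + (p:ℝ) * ((n:ℝ) - p) * ∑ i ∈ aᶜ, k i ^ 2
      = (p:ℝ) * ((n:ℝ) - p) * ∑ i, k i ^ 2 := by rw [← mul_add, hsum]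
  linarith
end

section
/- Let n ≥ 3 and p be integers with 1 ≤ p and 2p ≤ n, and let k₁,…,kₙ be real numbers with tr k = Σᵢ kᵢ ≥ 0. Suppose that the minimum of K_b · K_{⋆b} over all subsets b ⊆ {1,…,n} with |b| = p equals (1/4)·(tr k)² − (1/4)·( ((n−2p)/n)·tr k + √(4p(n−p)/n)·‖k̊‖ )². Then there exist a subset a ⊆ {1,…,n} with |a| = p and real numbers λ, μ such that kᵢ = λ for every i ∈ a and kᵢ = μ for every i ∉ a. -/
set_option maxHeartbeats 1000000 in

theorem equality_case_two_eigenvalues (n p : ℕ) (hn : 3 ≤ n) (hp : 1 ≤ p) (hpn : 2 * p ≤ n)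
    (k : Fin n → ℝ) (htr : 0 ≤ ∑ i, k i)
    (heq : (Finset.univ.powersetCard p).inf'
        (Finset.powersetCard_nonempty.mpr
          (by simp only [Finset.card_univ, Fintype.card_fin]; omega))
        (fun b => (∑ i ∈ b, k i) * (∑ i ∈ bᶜ, k i))
      = (1 / 4) * (∑ i, k i) ^ 2
        - (1 / 4) * (((n : ℝ) - 2 * (p : ℝ)) / (n : ℝ) * (∑ i, k i)
            + Real.sqrt (4 * (p : ℝ) * ((n : ℝ) - (p : ℝ)) / (n : ℝ))
              * Real.sqrt (∑ i, (k i - (∑ j, k j) / (n : ℝ)) ^ 2)) ^ 2) :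
    ∃ a : Finset (Fin n), a.card = p ∧ ∃ lam mu : ℝ,
      (∀ i ∈ a, k i = lam) ∧ (∀ i ∉ a, k i = mu) := by
  have hpn' : p < n := by omega
  -- basic real inequalities
  have hN0 : (0:ℝ) < (n:ℝ) := by positivity
  have hP0 : (0:ℝ) < (p:ℝ) := by exact_mod_cast hp
  have hNP0 : (0:ℝ) < (n:ℝ) - (p:ℝ) := by
    have : (p:ℝ) < (n:ℝ) := by exact_mod_cast hpn'
    linarith
  have hD0' : (0:ℝ) ≤ (n:ℝ) - 2*(p:ℝ) := by
    have : (2*p:ℝ) ≤ (n:ℝ) := by exact_mod_cast hpn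
    linarith
  -- extract a minimizing subset
  have hne : (Finset.univ.powersetCard p (α := Fin n)).Nonempty :=
    Finset.powersetCard_nonempty.mpr
      (by simp only [Finset.card_univ, Fintype.card_fin]; omega)
  obtain ⟨b, hbmem, hfb⟩ :=
    Finset.exists_mem_eq_inf' hne (fun b => (∑ i ∈ b, k i) * (∑ i ∈ bᶜ, k i))
  have hcardb : b.card = p := (Finset.mem_powersetCard.mp hbmem).2
  have hcardbc : bᶜ.card = n - p := by
    rw [Finset.card_compl, hcardb, Fintype.card_fin]
  set T : ℝ := ∑ i, k i with hT
  set S : ℝ := ∑ i ∈ b, k i with hS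
  have hcompl : ∑ i ∈ bᶜ, k i = T - S := by
    have := Finset.sum_add_sum_compl b k
    rw [← hS, ← hT] at this
    linarith
  set Q : ℝ := ∑ i, (k i - T / (n:ℝ)) ^ 2 with hQ
  have hQ0 : 0 ≤ Q := Finset.sum_nonneg fun i _ => sq_nonneg _
  set e : ℝ := Real.sqrt ((p:ℝ) * ((n:ℝ) - (p:ℝ)) / (n:ℝ)) * Real.sqrt Q with he
  have he0 : 0 ≤ e := mul_nonneg (Real.sqrt_nonneg _) (Real.sqrt_nonneg _)
  have hfrac0 : (0:ℝ) ≤ (p:ℝ) * ((n:ℝ) - (p:ℝ)) / (n:ℝ) := by positivity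
  have he2 : e ^ 2 = (p:ℝ) * ((n:ℝ) - (p:ℝ)) / (n:ℝ) * Q := by
    rw [he, mul_pow, Real.sq_sqrt hfrac0, Real.sq_sqrt hQ0]
  have hsqrt4 : Real.sqrt (4 * (p:ℝ) * ((n:ℝ) - (p:ℝ)) / (n:ℝ))
      = 2 * Real.sqrt ((p:ℝ) * ((n:ℝ) - (p:ℝ)) / (n:ℝ)) := by
    rw [show 4 * (p:ℝ) * ((n:ℝ) - (p:ℝ)) / (n:ℝ)
        = 2^2 * ((p:ℝ) * ((n:ℝ) - (p:ℝ)) / (n:ℝ)) by ring,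
      Real.sqrt_mul (by norm_num), Real.sqrt_sq (by norm_num)]
  -- the key equation at the minimizer
  set D : ℝ := ((n:ℝ) - 2*(p:ℝ)) / (n:ℝ) * T with hD
  have hD0 : 0 ≤ D := by
    rw [hD]
    have : 0 ≤ T := htr
    positivity
  have keyeq : S * (T - S) = (1/4) * T^2 - (1/4) * (D + 2*e)^2 := by
    have h1 := hfb.symm.trans heq
    rw [hcompl] at h1
    rw [hsqrt4] at h1
    rw [h1, he]
    ring
  -- squared identity
  have hsq : (2*S - T)^2 = (D + 2*e)^2 := by linarith [keyeq]
  -- x := S - p*T/n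
  set x : ℝ := S - (p:ℝ) * T / (n:ℝ) with hx
  -- sum of squares quantities
  set lam : ℝ := S / (p:ℝ) with hlam
  set mu : ℝ := (T - S) / ((n:ℝ) - (p:ℝ)) with hmu
  have I2 : ∑ i ∈ b, (k i - lam)^2 = (∑ i ∈ b, (k i)^2) - S^2 / (p:ℝ) := by
    have h : ∀ i ∈ b, (k i - lam)^2 = (k i)^2 - 2*lam*(k i) + lam^2 := fun i _ => by ring
    rw [Finset.sum_congr rfl h]
    rw [Finset.sum_add_distrib, Finset.sum_sub_distrib, ← Finset.mul_sum, ← hS,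
      Finset.sum_const, hcardb, nsmul_eq_mul, hlam]
    field_simp
    ring
  have I3 : ∑ i ∈ bᶜ, (k i - mu)^2 = (∑ i ∈ bᶜ, (k i)^2) - (T - S)^2 / ((n:ℝ) - (p:ℝ)) := by
    have h : ∀ i ∈ bᶜ, (k i - mu)^2 = (k i)^2 - 2*mu*(k i) + mu^2 := fun i _ => by ring
    rw [Finset.sum_congr rfl h]
    rw [Finset.sum_add_distrib, Finset.sum_sub_distrib, ← Finset.mul_sum, hcompl,
      Finset.sum_const, hcardbc, nsmul_eq_mul, hmu]
    have hcast : ((n - p : ℕ) : ℝ) = (n:ℝ) - (p:ℝ) := by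
      push_cast [Nat.cast_sub hpn'.le]; ring
    rw [hcast]
    field_simp
    ring
  have I4 : Q = (∑ i, (k i)^2) - T^2 / (n:ℝ) := by
    have h : ∀ i ∈ Finset.univ, (k i - T/(n:ℝ))^2
        = (k i)^2 - 2*(T/(n:ℝ))*(k i) + (T/(n:ℝ))^2 := fun i _ => by ring
    rw [hQ, Finset.sum_congr rfl h]
    rw [Finset.sum_add_distrib, Finset.sum_sub_distrib, ← Finset.mul_sum, ← hT,
      Finset.sum_const, Finset.card_univ, Fintype.card_fin, nsmul_eq_mul]
    field_simp
    ring
  have hsumsq : (∑ i ∈ b, (k i)^2) + (∑ i ∈ bᶜ, (k i)^2) = ∑ i, (k i)^2 :=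
    Finset.sum_add_sum_compl b _
  set R : ℝ := (∑ i ∈ b, (k i - lam)^2) + (∑ i ∈ bᶜ, (k i - mu)^2) with hR
  have hR0 : 0 ≤ R := by
    apply add_nonneg <;> exact Finset.sum_nonneg fun i _ => sq_nonneg _
  have I4' : Q = (∑ i ∈ b, (k i)^2) + (∑ i ∈ bᶜ, (k i)^2) - T^2 / (n:ℝ) := by
    rw [I4, ← hsumsq]
  have I5 : (p:ℝ) * ((n:ℝ) - (p:ℝ)) / (n:ℝ) * R = e^2 - x^2 := by
    rw [hR, I2, I3, he2, I4', hx]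
    have hn0 : (n:ℝ) ≠ 0 := ne_of_gt hN0
    have hp0 : (p:ℝ) ≠ 0 := ne_of_gt hP0
    have hnp0 : (n:ℝ) - (p:ℝ) ≠ 0 := ne_of_gt hNP0
    field_simp
    ring
  have hcoef : 0 < (p:ℝ) * ((n:ℝ) - (p:ℝ)) / (n:ℝ) := by positivity
  have h2x : 2*x - D = 2*S - T := by
    rw [hx, hD]
    field_simp
    ring
  clear_value T S Q e D x lam mu R
  -- Cauchy-Schwarz from nonnegativity of R
  have hxe : x^2 ≤ e^2 := by
    have h0 : 0 ≤ (p:ℝ) * ((n:ℝ) - (p:ℝ)) / (n:ℝ) * R := mul_nonneg hcoef.le hR0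
    rw [I5] at h0
    linarith
  -- from hsq: factor
  have hfact : (2*S - T - (D + 2*e)) * (2*S - T + (D + 2*e)) = 0 := by
    linear_combination hsq
  have hx2e2 : x^2 = e^2 := by
    rcases mul_eq_zero.mp hfact with h | h
    · -- 2S - T = D + 2e, so x = D + e
      have hxde : x = D + e := by linarith [h2x, h]
      have hexp : x^2 - e^2 = D^2 + 2*(D*e) := by rw [hxde]; ring
      have hle : D^2 + 2*(D*e) ≤ 0 := by linarith [hxe]
      have hge : 0 ≤ D^2 + 2*(D*e) := by
        have := mul_nonneg hD0 he0
        have := sq_nonneg D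
        linarith
      linarith
    · -- 2S - T = -(D + 2e), so x = -e
      have hxne : x = -e := by linarith [h2x, h]
      rw [hxne]; ring
  have hRzero : R = 0 := by
    have h0 : (p:ℝ) * ((n:ℝ) - (p:ℝ)) / (n:ℝ) * R = 0 := by rw [I5, hx2e2]; ring
    exact (mul_eq_zero.mp h0).resolve_left (ne_of_gt hcoef)
  -- conclude both sums are zero
  have h1z : ∑ i ∈ b, (k i - lam)^2 = 0 := by
    have h2 : 0 ≤ ∑ i ∈ bᶜ, (k i - mu)^2 := Finset.sum_nonneg fun i _ => sq_nonneg _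
    have h1 : 0 ≤ ∑ i ∈ b, (k i - lam)^2 := Finset.sum_nonneg fun i _ => sq_nonneg _
    rw [hR] at hRzero
    linarith
  have h2z : ∑ i ∈ bᶜ, (k i - mu)^2 = 0 := by
    have h1 : 0 ≤ ∑ i ∈ b, (k i - lam)^2 := Finset.sum_nonneg fun i _ => sq_nonneg _
    rw [hR] at hRzero
    linarith
  refine ⟨b, hcardb, lam, mu, ?_, ?_⟩
  · intro i hi
    have := (Finset.sum_eq_zero_iff_of_nonneg (fun i _ => sq_nonneg (k i - lam))).mp h1z i hi
    have := pow_eq_zero_iff (n := 2) (by norm_num) |>.mp this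
    linarith [this]
  · intro i hi
    have hic : i ∈ bᶜ := Finset.mem_compl.mpr hi
    have := (Finset.sum_eq_zero_iff_of_nonneg (fun i _ => sq_nonneg (k i - mu))).mp h2z i hic
    have := pow_eq_zero_iff (n := 2) (by norm_num) |>.mp this
    linarith [this]
end

section
/- Let n ≥ 3 and p be integers with 1 ≤ p and 2p < n. Let λ ≥ 0 be a real number, let a ⊆ {1,…,n} be a subset with |a| = p, and let k₁,…,kₙ be given by kᵢ = λ for i ∈ a and kᵢ = 0 for i ∉ a. If the minimum of K_b · K_{⋆b} over all subsets b ⊆ {1,…,n} with |b| = p equals (1/4)·(tr k)² − (1/4)·( ((n−2p)/n)·tr k + √(4p(n−p)/n)·‖k̊‖ )², then λ = 0, i.e. all kᵢ vanish. -/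
theorem equality_case_zero_eigenvalue (n p : ℕ) (hn : 3 ≤ n) (hp : 1 ≤ p) (hpn : 2 * p < n)
    (lam : ℝ) (hlam : 0 ≤ lam)
    (a : Finset (Fin n)) (ha : a.card = p)
    (k : Fin n → ℝ) (hk : ∀ i, k i = if i ∈ a then lam else 0)
    (heq : (Finset.univ.powersetCard p).inf'
        (Finset.powersetCard_nonempty.mpr
          (by simp only [Finset.card_univ, Fintype.card_fin]; omega))
        (fun b => (∑ i ∈ b, k i) * (∑ i ∈ bᶜ, k i))
      = (1 / 4) * (∑ i, k i) ^ 2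
        - (1 / 4) * (((n : ℝ) - 2 * (p : ℝ)) / (n : ℝ) * (∑ i, k i)
            + Real.sqrt (4 * (p : ℝ) * ((n : ℝ) - (p : ℝ)) / (n : ℝ))
              * Real.sqrt (∑ i, (k i - (∑ j, k j) / (n : ℝ)) ^ 2)) ^ 2) :
    lam = 0 := by
  have hkn : ∀ i, 0 ≤ k i := by
    intro i; rw [hk i]; split <;> simp [hlam]
  have hinf : (0:ℝ) ≤ (Finset.univ.powersetCard p).inf'
      (Finset.powersetCard_nonempty.mpr
        (by simp only [Finset.card_univ, Fintype.card_fin]; omega))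
      (fun b => (∑ i ∈ b, k i) * (∑ i ∈ bᶜ, k i)) := by
    apply Finset.le_inf'
    intro b _
    exact mul_nonneg (Finset.sum_nonneg fun i _ => hkn i)
      (Finset.sum_nonneg fun i _ => hkn i)
  have hn0 : (0:ℝ) < (n:ℝ) := by positivity
  have hS : ∑ i, k i = (p:ℝ) * lam := by
    simp only [hk]
    rw [Finset.sum_ite_mem, Finset.univ_inter, Finset.sum_const, ha]
    simp [mul_comm]
  have hcardc : (aᶜ : Finset (Fin n)).card = n - p := by
    rw [Finset.card_compl, ha, Fintype.card_fin]
  have hpleq : (p:ℝ) ≤ (n:ℝ) := by exact_mod_cast Nat.le_of_lt (by omega)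
  have hV : ∑ i, (k i - (∑ j, k j) / (n:ℝ)) ^ 2
      = lam ^ 2 * ((p:ℝ) * ((n:ℝ) - (p:ℝ)) / (n:ℝ)) := by
    rw [hS]
    have hterm : ∀ i : Fin n, (k i - (p:ℝ) * lam / n) ^ 2
        = if i ∈ a then (lam - (p:ℝ)*lam/n)^2 else ((p:ℝ)*lam/n)^2 := by
      intro i; rw [hk i]; split <;> ring
    rw [Finset.sum_congr rfl (fun i _ => hterm i), Finset.sum_ite,
      Finset.sum_const, Finset.sum_const]
    simp only [Finset.filter_mem_eq_inter, Finset.univ_inter, ha, nsmul_eq_mul]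
    have h2 : (Finset.univ.filter (fun i => i ∉ a)).card = n - p := by
      rw [← hcardc]; congr 1; ext i; simp
    rw [h2]
    have hc : ((n - p : ℕ) : ℝ) = (n:ℝ) - (p:ℝ) := by
      push_cast [Nat.cast_sub (by omega : p ≤ n)]; ring
    rw [hc]
    field_simp
    ring
  have hx : (0:ℝ) ≤ (p:ℝ) * ((n:ℝ) - (p:ℝ)) / (n:ℝ) := by
    apply div_nonneg _ (le_of_lt hn0)
    apply mul_nonneg (by positivity) (by linarith)
  have hsqrt : Real.sqrt (4 * (p:ℝ) * ((n:ℝ) - (p:ℝ)) / (n:ℝ))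
      * Real.sqrt (∑ i, (k i - (∑ j, k j) / (n:ℝ)) ^ 2)
      = 2 * lam * ((p:ℝ) * ((n:ℝ) - (p:ℝ)) / (n:ℝ)) := by
    have h4 : (0:ℝ) ≤ 4 * (p:ℝ) * ((n:ℝ) - (p:ℝ)) / (n:ℝ) := by
      rw [show 4 * (p:ℝ) * ((n:ℝ) - (p:ℝ)) / (n:ℝ)
        = 4 * ((p:ℝ) * ((n:ℝ) - (p:ℝ)) / (n:ℝ)) from by ring]
      linarith
    rw [hV, ← Real.sqrt_mul h4]
    have hsq : 4 * (p:ℝ) * ((n:ℝ) - (p:ℝ)) / (n:ℝ)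
          * (lam ^ 2 * ((p:ℝ) * ((n:ℝ) - (p:ℝ)) / (n:ℝ)))
        = (2 * lam * ((p:ℝ) * ((n:ℝ) - (p:ℝ)) / (n:ℝ))) ^ 2 := by ring
    rw [hsq, Real.sqrt_sq (by positivity)]
  rw [heq, hsqrt, hS] at hinf
  have hpR : (1:ℝ) ≤ (p:ℝ) := by exact_mod_cast hp
  have hnR : 2*(p:ℝ) + 1 ≤ (n:ℝ) := by exact_mod_cast (by omega : 2*p+1 ≤ n)
  have key : ((n:ℝ) - 2*(p:ℝ)) / (n:ℝ) * ((p:ℝ) * lam)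
      + 2 * lam * ((p:ℝ) * ((n:ℝ) - (p:ℝ)) / (n:ℝ))
      = lam * (p:ℝ) * (3*(n:ℝ) - 4*(p:ℝ)) / (n:ℝ) := by
    field_simp; ring
  rw [key] at hinf
  by_contra h
  have hlam0 : 0 < lam := lt_of_le_of_ne hlam (Ne.symm h)
  have h2 : (lam * (p:ℝ) * (3*(n:ℝ) - 4*(p:ℝ)))^2 ≤ ((p:ℝ)*lam)^2 * (n:ℝ)^2 := by
    rw [div_pow] at hinf
    have hn2 : (0:ℝ) < (n:ℝ)^2 := by positivity
    have h3 : (lam * (p:ℝ) * (3*(n:ℝ) - 4*(p:ℝ)))^2 / (n:ℝ)^2 ≤ ((p:ℝ)*lam)^2 := by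
      linarith
    exact (div_le_iff₀ hn2).mp h3
  have hA : (0:ℝ) < (n:ℝ) - 2*(p:ℝ) := by linarith
  have hB : (0:ℝ) < (n:ℝ) - (p:ℝ) := by linarith
  have hpP : (0:ℝ) < (p:ℝ) := by linarith
  nlinarith [h2, mul_pos (mul_pos hA hB) (mul_pos (mul_pos hlam0 hlam0) (mul_pos hpP hpP))]
end

section
/- Let n ≥ 3, p, m be integers with 1 ≤ p, 2p ≤ n and m ≥ 1. Let k(j,i), for 1 ≤ j ≤ m and 1 ≤ i ≤ n, be real numbers such that Σᵢ k(1,i) ≥ 0 and Σᵢ k(j,i) = 0 for every j ≥ 2. Set h = (1/n)·Σᵢ k(1,i) and φ = ( Σ_{j=1}^m Σ_{i=1}^n k(j,i)² − n·h² )^{1/2}. Then Σ_{j=1}^m ( min over subsets a ⊆ {1,…,n} with |a| = p of K_a(k_j)·K_{⋆a}(k_j) ) ≥ (p(n−p)/n)·( n·h² − (n(n−2p)/√(np(n−p)))·h·φ − φ² ), where k_j denotes the n-tuple (k(j,1),…,k(j,n)). -/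
open Finset

private lemma key_cs {n p : ℕ} (hn : 0 < n) (k : Fin n → ℝ) (a : Finset (Fin n))
    (ha : a.card = p) :
    (∑ i ∈ a, k i - (p : ℝ) / n * ∑ i, k i) ^ 2
      ≤ ((p : ℝ) * ((n : ℝ) - p) / n) * (∑ i, (k i) ^ 2 - (∑ i, k i) ^ 2 / n) := by
  have hN : (0:ℝ) < n := by exact_mod_cast hn
  have hpn : p ≤ n := by
    have := Finset.card_le_univ a
    simpa [ha, Fintype.card_fin] using this
  set S : ℝ := ∑ i, k i with hS
  set f : Fin n → ℝ := fun i => k i - S / n with hf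
  set g : Fin n → ℝ := fun i => (if i ∈ a then (1:ℝ) else 0) - p / n with hg
  have hcc : ((aᶜ).card : ℝ) = (n : ℝ) - p := by
    rw [Finset.card_compl, Fintype.card_fin, ha, Nat.cast_sub hpn]
  have hsumf : ∑ i, f i = 0 := by
    simp only [hf]
    rw [Finset.sum_sub_distrib, Finset.sum_const, Finset.card_univ, Fintype.card_fin,
      nsmul_eq_mul]
    field_simp
    simp [hS]
  have hsa : ∑ i ∈ a, f i = ∑ i ∈ a, k i - p * S / n := by
    simp only [hf]
    rw [Finset.sum_sub_distrib, Finset.sum_const, ha, nsmul_eq_mul]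
    ring
  have hsc : ∑ i ∈ aᶜ, f i = -(∑ i ∈ a, k i - p * S / n) := by
    have h1 := Finset.sum_add_sum_compl a f
    rw [hsumf] at h1
    linarith [hsa]
  have hfg : ∑ i, f i * g i = ∑ i ∈ a, k i - p * S / n := by
    rw [← Finset.sum_add_sum_compl a (fun i => f i * g i)]
    have h1 : ∑ i ∈ a, f i * g i = (1 - (p:ℝ) / n) * ∑ i ∈ a, f i := by
      rw [Finset.mul_sum]
      refine Finset.sum_congr rfl fun i hi => ?_
      simp only [hg, if_pos hi]
      ring
    have h2 : ∑ i ∈ aᶜ, f i * g i = (-((p:ℝ)/n)) * ∑ i ∈ aᶜ, f i := by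
      rw [Finset.mul_sum]
      refine Finset.sum_congr rfl fun i hi => ?_
      simp only [hg, if_neg (Finset.mem_compl.mp hi)]
      ring
    rw [h1, h2, hsa, hsc]
    ring
  have hf2 : ∑ i, f i ^ 2 = ∑ i, (k i) ^ 2 - S ^ 2 / n := by
    have he : ∀ i : Fin n, f i ^ 2 = k i ^ 2 - (2*(S/n)) * k i + (S/n)^2 := by
      intro i; simp only [hf]; ring
    simp_rw [he]
    rw [Finset.sum_add_distrib, Finset.sum_sub_distrib, ← Finset.mul_sum, Finset.sum_const,
      Finset.card_univ, Fintype.card_fin, nsmul_eq_mul, ← hS]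
    field_simp
    ring
  have hg2 : ∑ i, g i ^ 2 = (p:ℝ) * ((n:ℝ) - p) / n := by
    rw [← Finset.sum_add_sum_compl a (fun i => g i ^ 2)]
    have h1 : ∑ i ∈ a, g i ^ 2 = (p:ℝ) * (1 - (p:ℝ)/n)^2 := by
      calc ∑ i ∈ a, g i ^ 2 = ∑ _i ∈ a, (1 - (p:ℝ)/n)^2 :=
            Finset.sum_congr rfl (fun i hi => by simp only [hg, if_pos hi])
        _ = (p:ℝ) * (1 - (p:ℝ)/n)^2 := by rw [Finset.sum_const, ha, nsmul_eq_mul]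
    have h2 : ∑ i ∈ aᶜ, g i ^ 2 = ((n:ℝ) - p) * ((p:ℝ)/n)^2 := by
      calc ∑ i ∈ aᶜ, g i ^ 2 = ∑ _i ∈ aᶜ, ((p:ℝ)/n)^2 :=
            Finset.sum_congr rfl (fun i hi => by
              simp only [hg, if_neg (Finset.mem_compl.mp hi)]; ring)
        _ = ((n:ℝ) - p) * ((p:ℝ)/n)^2 := by rw [Finset.sum_const, nsmul_eq_mul, hcc]
    rw [h1, h2]
    field_simp
    ring
  have hcs := Finset.sum_mul_sq_le_sq_mul_sq Finset.univ f g
  rw [hfg, hf2, hg2] at hcs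
  calc (∑ i ∈ a, k i - (p:ℝ)/n * S)^2 = (∑ i ∈ a, k i - (p:ℝ)*S/n)^2 := by ring
    _ ≤ (∑ i, (k i)^2 - S^2/n) * ((p:ℝ) * ((n:ℝ) - p) / n) := hcs
    _ = ((p:ℝ) * ((n:ℝ) - p) / n) * (∑ i, (k i)^2 - S^2/n) := by ring

private lemma var_nonneg {n : ℕ} (hn : 0 < n) (k : Fin n → ℝ) :
    (∑ i, k i) ^ 2 / n ≤ ∑ i, (k i) ^ 2 := by
  have hN : (0:ℝ) < n := by exact_mod_cast hn
  have hcs := Finset.sum_mul_sq_le_sq_mul_sq Finset.univ k (fun _ => (1:ℝ))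
  simp only [mul_one, one_pow, Finset.sum_const, Finset.card_univ, Fintype.card_fin,
    nsmul_eq_mul] at hcs
  rw [div_le_iff₀ hN]
  linarith

set_option maxHeartbeats 1000000 in
theorem bochner_operator_lower_bound (n p m : ℕ) (hn : 3 ≤ n) (hp : 1 ≤ p)
    (hpn : 2 * p ≤ n) (hm : 1 ≤ m)
    (k : Fin m → Fin n → ℝ)
    (h0 : 0 ≤ ∑ i, k ⟨0, hm⟩ i)
    (hj : ∀ j : Fin m, (j : ℕ) ≠ 0 → ∑ i, k j i = 0) :
    ∑ j, (Finset.univ.powersetCard p).inf'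
        (Finset.powersetCard_nonempty.mpr
          (by simp only [Finset.card_univ, Fintype.card_fin]; omega))
        (fun a => (∑ i ∈ a, k j i) * (∑ i ∈ aᶜ, k j i))
    ≥ ((p : ℝ) * ((n : ℝ) - (p : ℝ)) / (n : ℝ)) *
        ((n : ℝ) * ((∑ i, k ⟨0, hm⟩ i) / (n : ℝ)) ^ 2
          - ((n : ℝ) * ((n : ℝ) - 2 * (p : ℝ))
              / Real.sqrt ((n : ℝ) * (p : ℝ) * ((n : ℝ) - (p : ℝ))))
            * ((∑ i, k ⟨0, hm⟩ i) / (n : ℝ))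
            * Real.sqrt ((∑ j, ∑ i, (k j i) ^ 2)
                - (n : ℝ) * ((∑ i, k ⟨0, hm⟩ i) / (n : ℝ)) ^ 2)
          - (Real.sqrt ((∑ j, ∑ i, (k j i) ^ 2)
                - (n : ℝ) * ((∑ i, k ⟨0, hm⟩ i) / (n : ℝ)) ^ 2)) ^ 2) := by
  have hn0 : 0 < n := by omega
  have hN : (0:ℝ) < n := by exact_mod_cast hn0
  have hP1 : (1:ℝ) ≤ p := by exact_mod_cast hp
  have h2p : 2 * (p:ℝ) ≤ n := by exact_mod_cast hpn
  have hNP : (p:ℝ) < n := by linarith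
  set j₀ : Fin m := ⟨0, hm⟩ with hj₀
  set S : ℝ := ∑ i, k j₀ i with hSdef
  set H : ℝ := S / n with hHdef
  have hH : 0 ≤ H := div_nonneg h0 hN.le
  have hSNH : S = n * H := by rw [hHdef]; field_simp
  set c2 : ℝ := (p:ℝ) * ((n:ℝ) - p) / n with hc2def
  have hc2 : 0 < c2 := by
    apply div_pos (mul_pos (by linarith) (by linarith)) hN
  set Q0 : ℝ := ∑ i, (k j₀ i) ^ 2 with hQ0def
  set T : ℝ := ∑ j, ∑ i, (k j i) ^ 2 with hTdef
  have hQnn : ∀ j : Fin m, 0 ≤ ∑ i, (k j i) ^ 2 := fun j =>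
    Finset.sum_nonneg fun i _ => sq_nonneg _
  have hQ0T : Q0 ≤ T :=
    Finset.single_le_sum (fun j _ => hQnn j) (Finset.mem_univ j₀)
  have hS2 : S ^ 2 / n = n * H ^ 2 := by rw [hSNH]; field_simp
  have hφ0nn : 0 ≤ Q0 - (n:ℝ) * H ^ 2 := by
    have := var_nonneg hn0 (k j₀)
    rw [← hSdef, ← hQ0def, hS2] at this
    linarith
  have hφnn : 0 ≤ T - (n:ℝ) * H ^ 2 := by linarith
  set φ0 : ℝ := Real.sqrt (Q0 - (n:ℝ) * H ^ 2) with hφ0def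
  set φ : ℝ := Real.sqrt (T - (n:ℝ) * H ^ 2) with hφdef
  have hφ0 : 0 ≤ φ0 := Real.sqrt_nonneg _
  have hφ : 0 ≤ φ := Real.sqrt_nonneg _
  have hφmono : φ0 ≤ φ := Real.sqrt_le_sqrt (by linarith)
  have hφsq : φ ^ 2 = T - (n:ℝ) * H ^ 2 := Real.sq_sqrt hφnn
  have hφ0sq : φ0 ^ 2 = Q0 - (n:ℝ) * H ^ 2 := Real.sq_sqrt hφ0nn
  have hsc2 : 0 ≤ Real.sqrt c2 := Real.sqrt_nonneg _
  have hsc2sq : (Real.sqrt c2) ^ 2 = c2 := Real.sq_sqrt hc2.le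
  set R : ℝ := Real.sqrt ((n:ℝ) * p * ((n:ℝ) - p)) with hRdef
  have hRarg : 0 < (n:ℝ) * p * ((n:ℝ) - p) := by
    apply mul_pos (mul_pos hN (by linarith)) (by linarith)
  have hRpos : 0 < R := Real.sqrt_pos.mpr hRarg
  have hR2 : R ^ 2 = (n:ℝ) * p * ((n:ℝ) - p) := Real.sq_sqrt hRarg.le
  have hsqrtc2 : Real.sqrt c2 = R / n := by
    rw [show c2 = (R / n) ^ 2 by rw [div_pow, hR2, hc2def]; field_simp]
    exact Real.sqrt_sq (by positivity)
  have hcoef : c2 * ((n:ℝ) * ((n:ℝ) - 2 * p) / R) = ((n:ℝ) - 2 * p) * Real.sqrt c2 := by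
    rw [hsqrtc2, hc2def]
    field_simp
    linear_combination (2 * (p:ℝ) - (n:ℝ)) * hR2
  clear_value S H c2 Q0 T φ0 φ R
  -- the nonemptiness proof
  have hne : ((Finset.univ : Finset (Fin n)).powersetCard p).Nonempty :=
    Finset.powersetCard_nonempty.mpr
      (by simp only [Finset.card_univ, Fintype.card_fin]; omega)
  -- per-subset bound for j₀
  set L0 : ℝ := (p:ℝ) * ((n:ℝ) - p) * H ^ 2
      - ((n:ℝ) - 2 * p) * H * Real.sqrt c2 * φ0 - c2 * (Q0 - (n:ℝ) * H ^ 2) with hL0def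
  clear_value L0
  have main0 : ∀ a ∈ (Finset.univ : Finset (Fin n)).powersetCard p,
      L0 ≤ (∑ i ∈ a, k j₀ i) * (∑ i ∈ aᶜ, k j₀ i) := by
    intro a hamem
    obtain ⟨-, ha⟩ := Finset.mem_powersetCard.mp hamem
    have hcs := key_cs hn0 (k j₀) a ha
    rw [← hSdef, ← hQ0def, hS2, ← hc2def] at hcs
    set A : ℝ := ∑ i ∈ a, k j₀ i with hAdef
    have hAB : A + (∑ i ∈ aᶜ, k j₀ i) = S := by
      rw [hSdef]; exact Finset.sum_add_sum_compl a (k j₀)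
    have hB : (∑ i ∈ aᶜ, k j₀ i) = (n:ℝ) * H - A := by rw [← hSNH]; linarith
    have hM2 : (A - (p:ℝ) * H) ^ 2 ≤ c2 * (Q0 - (n:ℝ) * H ^ 2) := by
      have : A - (p:ℝ) / n * S = A - (p:ℝ) * H := by rw [hSNH]; field_simp
      rw [this] at hcs
      exact hcs
    have hX2 : (Real.sqrt c2 * φ0) ^ 2 = c2 * (Q0 - (n:ℝ) * H ^ 2) := by
      rw [mul_pow, hsc2sq, hφ0sq]
    have habs : |A - (p:ℝ) * H| ≤ Real.sqrt c2 * φ0 := by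
      rw [← Real.sqrt_sq_eq_abs]
      calc Real.sqrt ((A - (p:ℝ)*H)^2) ≤ Real.sqrt ((Real.sqrt c2 * φ0)^2) :=
            Real.sqrt_le_sqrt (by rw [hX2]; exact hM2)
        _ = Real.sqrt c2 * φ0 := Real.sqrt_sq (by positivity)
    have hMlow : -(Real.sqrt c2 * φ0) ≤ A - (p:ℝ) * H := by
      have := neg_abs_le (A - (p:ℝ) * H)
      linarith
    rw [hB]
    have hprod : 0 ≤ (((n:ℝ) - 2*p) * H) * ((A - (p:ℝ)*H) + Real.sqrt c2 * φ0) :=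
      mul_nonneg (mul_nonneg (by linarith) hH) (by linarith)
    have hid : A * ((n:ℝ)*H - A) = (p:ℝ)*((n:ℝ)-p)*H^2
        + (((n:ℝ)-2*p)*H) * (A - (p:ℝ)*H) - (A - (p:ℝ)*H)^2 := by ring
    rw [hid, hL0def]
    linarith [hprod, hM2]
  -- per-subset bound for other j
  have mainj : ∀ j : Fin m, j ≠ j₀ → ∀ a ∈ (Finset.univ : Finset (Fin n)).powersetCard p,
      -(c2 * ∑ i, (k j i) ^ 2) ≤ (∑ i ∈ a, k j i) * (∑ i ∈ aᶜ, k j i) := by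
    intro j hjne a hamem
    obtain ⟨-, ha⟩ := Finset.mem_powersetCard.mp hamem
    have hSj : ∑ i, k j i = 0 := by
      apply hj
      intro hv
      exact hjne (Fin.ext hv)
    have hcs := key_cs hn0 (k j) a ha
    rw [hSj, ← hc2def] at hcs
    set A : ℝ := ∑ i ∈ a, k j i with hAdef
    have hAB : A + (∑ i ∈ aᶜ, k j i) = 0 := by
      rw [← hSj]; exact Finset.sum_add_sum_compl a (k j)
    have hB : (∑ i ∈ aᶜ, k j i) = -A := by linarith
    rw [hB]
    have hA2 : A ^ 2 ≤ c2 * ∑ i, (k j i) ^ 2 := by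
      calc A ^ 2 = (A - (p:ℝ)/n * 0) ^ 2 := by ring
        _ ≤ c2 * ((∑ i, (k j i) ^ 2) - 0 ^ 2 / n) := hcs
        _ = c2 * ∑ i, (k j i) ^ 2 := by ring
    have : A * -A = -(A^2) := by ring
    rw [this]
    linarith [hA2]
  -- assemble
  rw [ge_iff_le]
  have hinf0 : L0 ≤ (Finset.univ.powersetCard p).inf' hne
      (fun a => (∑ i ∈ a, k j₀ i) * (∑ i ∈ aᶜ, k j₀ i)) :=
    Finset.le_inf' hne _ main0
  have hinfj : ∀ j ∈ Finset.univ.erase j₀,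
      -(c2 * ∑ i, (k j i) ^ 2) ≤ (Finset.univ.powersetCard p).inf' hne
        (fun a => (∑ i ∈ a, k j i) * (∑ i ∈ aᶜ, k j i)) := by
    intro j hjmem
    exact Finset.le_inf' hne _ (mainj j (Finset.mem_erase.mp hjmem).1)
  have hsplit := Finset.add_sum_erase Finset.univ
    (fun j => (Finset.univ.powersetCard p).inf' hne
      (fun a => (∑ i ∈ a, k j i) * (∑ i ∈ aᶜ, k j i))) (Finset.mem_univ j₀)
  have hsumQ : ∑ j ∈ Finset.univ.erase j₀, (∑ i, (k j i) ^ 2) = T - Q0 := by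
    rw [hTdef, hQ0def]
    exact Finset.sum_erase_eq_sub (Finset.mem_univ j₀)
  have hsumrest : ∑ j ∈ Finset.univ.erase j₀, -(c2 * ∑ i, (k j i) ^ 2)
      = -(c2 * (T - Q0)) := by
    rw [Finset.sum_neg_distrib, ← Finset.mul_sum, hsumQ]
  have hlow : L0 - c2 * (T - Q0)
      ≤ ∑ j, (Finset.univ.powersetCard p).inf' hne
          (fun a => (∑ i ∈ a, k j i) * (∑ i ∈ aᶜ, k j i)) := by
    rw [← hsplit]
    have := Finset.sum_le_sum hinfj
    rw [hsumrest] at this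
    linarith
  refine le_trans ?_ hlow
  -- final arithmetic
  have hmono : (((n:ℝ) - 2*p) * H * Real.sqrt c2) * φ0
      ≤ (((n:ℝ) - 2*p) * H * Real.sqrt c2) * φ :=
    mul_le_mul_of_nonneg_left hφmono
      (mul_nonneg (mul_nonneg (by linarith) hH) hsc2)
  have hc2N : c2 * (n:ℝ) = (p:ℝ) * ((n:ℝ) - p) := by rw [hc2def]; field_simp
  have e1 : c2 * ((n:ℝ) * H ^ 2
        - ((n:ℝ) * ((n:ℝ) - 2 * p) / R) * H * φ - φ ^ 2)
      = (p:ℝ) * ((n:ℝ) - p) * H ^ 2 - (((n:ℝ) - 2*p) * H * Real.sqrt c2) * φ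
        - c2 * (T - (n:ℝ) * H ^ 2) := by
    linear_combination H ^ 2 * hc2N - H * φ * hcoef - c2 * hφsq
  refine le_trans (le_of_eq e1) ?_
  rw [hL0def]
  linarith [hmono]
end

section
/- Let n ≥ 3, p, m be integers with 1 ≤ p, 2p < n and m ≥ 1. Let k(j,i), for 1 ≤ j ≤ m and 1 ≤ i ≤ n, be real numbers such that Σᵢ k(1,i) > 0 and Σᵢ k(j,i) = 0 for every j ≥ 2. Set h = (1/n)·Σᵢ k(1,i) and φ = ( Σ_{j=1}^m Σ_{i=1}^n k(j,i)² − n·h² )^{1/2}. If Σ_{j=1}^m ( min over subsets a ⊆ {1,…,n} with |a| = p of K_a(k_j)·K_{⋆a}(k_j) ) = (p(n−p)/n)·( n·h² − (n(n−2p)/√(np(n−p)))·h·φ − φ² ), then k(j,i) = 0 for all j ≥ 2 and all i, and there exist a subset a ⊆ {1,…,n} with |a| = p and real numbers λ, μ with k(1,i) = λ for i ∈ a and k(1,i) = μ for i ∉ a. -/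
set_option maxHeartbeats 1000000

open Finset in
lemma cs_aux {n : ℕ} (e : Fin n → ℝ) (he : ∑ i, e i = 0) (a : Finset (Fin n)) :
    (n : ℝ) * (∑ i ∈ a, e i) ^ 2 ≤
      (a.card : ℝ) * ((n : ℝ) - a.card) * ∑ i, e i ^ 2 := by
  have h1 : (∑ i ∈ a, e i) ^ 2 ≤ (a.card : ℝ) * ∑ i ∈ a, e i ^ 2 := by
    exact sq_sum_le_card_mul_sum_sq
  have h2 : (∑ i ∈ aᶜ, e i) ^ 2 ≤ ((aᶜ).card : ℝ) * ∑ i ∈ aᶜ, e i ^ 2 := by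
    exact sq_sum_le_card_mul_sum_sq
  have hs : ∑ i ∈ a, e i + ∑ i ∈ aᶜ, e i = 0 := by
    rw [Finset.sum_add_sum_compl]; exact he
  have hsq : ∑ i ∈ a, e i ^ 2 + ∑ i ∈ aᶜ, e i ^ 2 = ∑ i, e i ^ 2 :=
    Finset.sum_add_sum_compl a _
  have hcard : ((aᶜ).card : ℝ) = (n : ℝ) - a.card := by
    rw [Finset.card_compl, Fintype.card_fin, Nat.cast_sub (a.card_le_univ.trans_eq (by simp))]
  have hcle : (a.card : ℝ) ≤ n := by
    exact_mod_cast (a.card_le_univ.trans_eq (by simp))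
  have hc0 : (0:ℝ) ≤ a.card := Nat.cast_nonneg _
  rw [hcard] at h2
  have he2 : ∑ i ∈ aᶜ, e i = -(∑ i ∈ a, e i) := by linarith
  rw [he2] at h2
  rw [← hsq]
  nlinarith [mul_le_mul_of_nonneg_left h1 (by linarith : (0:ℝ) ≤ (n:ℝ) - a.card),
    mul_le_mul_of_nonneg_left h2 hc0]

lemma alg_aux (pp np : ℝ) (hpp : 0 < pp) (hnp : 0 < np)
    (E h P X : ℝ)
    (hE : E^2 * (pp + np) = pp * np * P) :
    (X - 2*(h + E/pp)*(E + pp*h) + pp*(h + E/pp)^2)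
      + ((P + (pp+np)*h^2 - X) - 2*(h - E/np)*((pp+np)*h - (E + pp*h))
          + np*(h - E/np)^2) = 0 := by
  have ha : pp * (E/pp) = E := by field_simp
  have hb : np * (E/np) = E := by field_simp
  have key : E^2/pp + E^2/np = P := by
    rw [div_add_div _ _ hpp.ne' hnp.ne', div_eq_iff (by positivity)]
    linear_combination hE
  linear_combination (E/pp) * ha + (E/np) * hb - key


theorem bochner_equality_case_mean_curvature (n p m : ℕ) (hn : 3 ≤ n) (hp : 1 ≤ p)
    (hpn : 2 * p < n) (hm : 1 ≤ m)
    (k : Fin m → Fin n → ℝ)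
    (h0 : 0 < ∑ i, k ⟨0, hm⟩ i)
    (hj : ∀ j : Fin m, (j : ℕ) ≠ 0 → ∑ i, k j i = 0)
    (heq : ∑ j, (Finset.univ.powersetCard p).inf'
        (Finset.powersetCard_nonempty.mpr
          (by simp only [Finset.card_univ, Fintype.card_fin]; omega))
        (fun a => (∑ i ∈ a, k j i) * (∑ i ∈ aᶜ, k j i))
      = ((p : ℝ) * ((n : ℝ) - (p : ℝ)) / (n : ℝ)) *
          ((n : ℝ) * ((∑ i, k ⟨0, hm⟩ i) / (n : ℝ)) ^ 2
            - ((n : ℝ) * ((n : ℝ) - 2 * (p : ℝ))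
                / Real.sqrt ((n : ℝ) * (p : ℝ) * ((n : ℝ) - (p : ℝ))))
              * ((∑ i, k ⟨0, hm⟩ i) / (n : ℝ))
              * Real.sqrt ((∑ j, ∑ i, (k j i) ^ 2)
                  - (n : ℝ) * ((∑ i, k ⟨0, hm⟩ i) / (n : ℝ)) ^ 2)
            - (Real.sqrt ((∑ j, ∑ i, (k j i) ^ 2)
                  - (n : ℝ) * ((∑ i, k ⟨0, hm⟩ i) / (n : ℝ)) ^ 2)) ^ 2)) :
    (∀ j : Fin m, (j : ℕ) ≠ 0 → ∀ i, k j i = 0) ∧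
    ∃ a : Finset (Fin n), a.card = p ∧ ∃ lam mu : ℝ,
      (∀ i ∈ a, k ⟨0, hm⟩ i = lam) ∧ (∀ i ∉ a, k ⟨0, hm⟩ i = mu) := by
  classical
  set z : Fin m := ⟨0, hm⟩ with hzdef
  have hn0 : (0:ℝ) < n := by exact_mod_cast Nat.pos_of_ne_zero (by omega)
  have hp0 : (0:ℝ) < p := by exact_mod_cast hp
  have hplt : p < n := by omega
  have hnp : (0:ℝ) < (n:ℝ) - p := by
    have : (p:ℝ) < n := by exact_mod_cast hplt
    linarith
  have hn2p : (0:ℝ) < (n:ℝ) - 2*p := by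
    have : ((2*p : ℕ) : ℝ) < n := by exact_mod_cast hpn
    push_cast at this; linarith
  set S : ℝ := ∑ i, k z i with hSdef
  set hh : ℝ := S / n with hhdef
  have hhpos : (0:ℝ) < hh := div_pos h0 hn0
  have hS : S = n * hh := by rw [hhdef]; field_simp
  set Q : ℝ := ∑ j, ∑ i, (k j i)^2 with hQdef
  set φ : ℝ := Real.sqrt (Q - n * hh^2) with hphidef
  set r : ℝ := Real.sqrt ((p:ℝ) * ((n:ℝ)-p) / n) with hrdef
  have hr2 : r^2 = (p:ℝ)*((n:ℝ)-p)/n := Real.sq_sqrt (by positivity)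
  have hrpos : (0:ℝ) < r := Real.sqrt_pos.mpr (by positivity)
  have hnr : (p:ℝ)*((n:ℝ)-p) = n * r^2 := by rw [hr2]; field_simp
  have hsqrtnp : Real.sqrt ((n:ℝ)*p*((n:ℝ)-p)) = n * r := by
    rw [show (n:ℝ)*p*((n:ℝ)-p) = (n:ℝ)^2 * ((p:ℝ)*((n:ℝ)-p)/n) by field_simp,
      Real.sqrt_mul (by positivity), Real.sqrt_sq hn0.le, hrdef]
  rw [hsqrtnp] at heq
  have hNne : (Finset.univ.powersetCard p : Finset (Finset (Fin n))).Nonempty :=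
    Finset.powersetCard_nonempty.mpr (by simp only [Finset.card_univ, Fintype.card_fin]; omega)
  set e1 : Fin n → ℝ := fun i => k z i - hh with he1def
  set P1 : ℝ := ∑ i, (e1 i)^2 with hP1def
  have hP1nn : 0 ≤ P1 := Finset.sum_nonneg fun i _ => sq_nonneg _
  set c : ℝ := r * Real.sqrt P1 with hcdef
  have hcnn : 0 ≤ c := mul_nonneg hrpos.le (Real.sqrt_nonneg _)
  have hc2 : c^2 = r^2 * P1 := by rw [hcdef, mul_pow, Real.sq_sqrt hP1nn]
  have hesum : ∑ i, e1 i = 0 := by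
    simp only [he1def]
    rw [Finset.sum_sub_distrib, Finset.sum_const, Finset.card_univ, Fintype.card_fin,
      nsmul_eq_mul, ← hSdef, hS]
    ring
  have hP1eq : P1 = (∑ i, (k z i)^2) - n*hh^2 := by
    rw [hP1def]
    simp only [he1def]
    have hexp : ∀ i ∈ (Finset.univ : Finset (Fin n)),
        (k z i - hh)^2 = (k z i)^2 - 2*hh*(k z i) + hh^2 := fun i _ => by ring
    rw [Finset.sum_congr rfl hexp, Finset.sum_add_distrib, Finset.sum_sub_distrib,
      ← Finset.mul_sum, Finset.sum_const, Finset.card_univ, Fintype.card_fin,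
      nsmul_eq_mul, ← hSdef, hS]
    ring
  -- sum over a of e1
  have hEa : ∀ a : Finset (Fin n), a.card = p →
      ∑ i ∈ a, e1 i = (∑ i ∈ a, k z i) - p*hh := by
    intro a ha
    simp only [he1def]
    rw [Finset.sum_sub_distrib, Finset.sum_const, ha, nsmul_eq_mul]
  have hcompl0 : ∀ a : Finset (Fin n), ∑ i ∈ aᶜ, k z i = n*hh - ∑ i ∈ a, k z i := by
    intro a
    have := Finset.sum_add_sum_compl a (k z)
    rw [← hSdef] at this
    linarith [hS]
  -- per subset bound for the first vector
  have hbound0 : ∀ a ∈ (Finset.univ.powersetCard p : Finset (Finset (Fin n))),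
      (n:ℝ)*r^2*hh^2 - ((n:ℝ)-2*p)*hh*c - c^2 ≤ (∑ i ∈ a, k z i) * (∑ i ∈ aᶜ, k z i) := by
    intro a hamem
    have ha : a.card = p := by rwa [Finset.mem_powersetCard_univ] at hamem
    have hEcs := cs_aux e1 hesum a
    rw [ha, hEa a ha, ← hP1def] at hEcs
    have hE2 : ((∑ i ∈ a, k z i) - p*hh)^2 ≤ r^2 * P1 := by
      rw [hr2, div_mul_eq_mul_div, le_div_iff₀ hn0]
      linarith only [hEcs]
    have hEc2 : ((∑ i ∈ a, k z i) - p*hh)^2 ≤ c^2 := by rw [hc2]; exact hE2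
    have hElow : -c ≤ (∑ i ∈ a, k z i) - p*hh := (abs_le_of_sq_le_sq' hEc2 hcnn).1
    have hval : (∑ i ∈ a, k z i) * (∑ i ∈ aᶜ, k z i)
        = (n:ℝ)*r^2*hh^2 + ((n:ℝ)-2*p)*hh*((∑ i ∈ a, k z i) - p*hh)
          - ((∑ i ∈ a, k z i) - p*hh)^2 := by
      rw [hcompl0 a, ← hnr]; ring
    rw [hval]
    linarith only [mul_nonneg (mul_nonneg hn2p.le hhpos.le)
      (by linarith only [hElow] : (0:ℝ) ≤ ((∑ i ∈ a, k z i) - p*hh) + c), hEc2]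
  -- per subset bound for the other vectors
  have hboundj : ∀ j : Fin m, (∑ i, k j i) = 0 →
      ∀ a ∈ (Finset.univ.powersetCard p : Finset (Finset (Fin n))),
      -(r^2 * ∑ i, (k j i)^2) ≤ (∑ i ∈ a, k j i) * (∑ i ∈ aᶜ, k j i) := by
    intro j hj0 a hamem
    have ha : a.card = p := by rwa [Finset.mem_powersetCard_univ] at hamem
    have hEcs := cs_aux (k j) hj0 a
    rw [ha] at hEcs
    have hcompl : ∑ i ∈ aᶜ, k j i = -(∑ i ∈ a, k j i) := by
      have := Finset.sum_add_sum_compl a (k j)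
      rw [hj0] at this
      linarith
    rw [hcompl]
    have hsql : (∑ i ∈ a, k j i)^2 ≤ r^2 * ∑ i, (k j i)^2 := by
      rw [hr2, div_mul_eq_mul_div, le_div_iff₀ hn0]
      linarith only [hEcs]
    linarith only [hsql]
  set T : ℝ := ∑ j ∈ Finset.univ.erase z, ∑ i, (k j i)^2 with hTdef
  have hTnn : 0 ≤ T := Finset.sum_nonneg fun j _ => Finset.sum_nonneg fun i _ => sq_nonneg _
  have hQsplit : Q = (∑ i, (k z i)^2) + T := by
    rw [hQdef, hTdef]
    exact (Finset.add_sum_erase _ _ (Finset.mem_univ z)).symm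
  have hφarg : Q - n*hh^2 = P1 + T := by rw [hQsplit]; linarith [hP1eq]
  have hφ2 : φ^2 = P1 + T := by
    rw [hphidef, Real.sq_sqrt (by linarith : (0:ℝ) ≤ Q - n*hh^2)]
    exact hφarg
  have hφnn : 0 ≤ φ := Real.sqrt_nonneg _
  have hcleC : c ≤ r * φ := by
    rw [hcdef, hphidef]
    exact mul_le_mul_of_nonneg_left (Real.sqrt_le_sqrt (by linarith)) hrpos.le
  -- package the inf' function
  obtain ⟨F, hF, heq2⟩ : ∃ F : Fin m → ℝ,
      (∀ j, F j = (Finset.univ.powersetCard p).inf' hNne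
        (fun a => (∑ i ∈ a, k j i) * (∑ i ∈ aᶜ, k j i))) ∧
      ∑ j, F j = (p:ℝ)*((n:ℝ)-p)/n *
        ((n:ℝ)*hh^2 - ((n:ℝ)*((n:ℝ)-2*p)/((n:ℝ)*r))*hh*φ - φ^2) :=
    ⟨_, fun j => rfl, heq⟩
  clear heq
  have hRHSsimp : (p:ℝ)*((n:ℝ)-p)/n *
      ((n:ℝ)*hh^2 - ((n:ℝ)*((n:ℝ)-2*p)/((n:ℝ)*r))*hh*φ - φ^2)
      = (n:ℝ)*r^2*hh^2 - ((n:ℝ)-2*p)*hh*(r*φ) - (r*φ)^2 := by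
    rw [hnr]
    field_simp
  rw [hRHSsimp, ← Finset.add_sum_erase Finset.univ F (Finset.mem_univ z)] at heq2
  have hFz : (n:ℝ)*r^2*hh^2 - ((n:ℝ)-2*p)*hh*c - c^2 ≤ F z := by
    rw [hF z]; exact Finset.le_inf' _ _ hbound0
  have hjne : ∀ j ∈ Finset.univ.erase z, (j:ℕ) ≠ 0 := by
    intro j hjm hval0
    exact (Finset.mem_erase.mp hjm).1 (Fin.ext (by simp [hzdef, hval0]))
  have hFj : ∀ j ∈ Finset.univ.erase z, -(r^2 * ∑ i, (k j i)^2) ≤ F j := by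
    intro j hjm
    rw [hF j]
    exact Finset.le_inf' _ _ (hboundj j (hj j (hjne j hjm)))
  have hsumle : -(r^2 * T) ≤ ∑ j ∈ Finset.univ.erase z, F j := by
    calc -(r^2*T) = ∑ j ∈ Finset.univ.erase z, -(r^2 * ∑ i, (k j i)^2) := by
          rw [hTdef, Finset.mul_sum, ← Finset.sum_neg_distrib]
      _ ≤ _ := Finset.sum_le_sum hFj
  have hC2 : (r*φ)^2 = r^2*P1 + r^2*T := by rw [mul_pow, hφ2]; ring
  have hCeqc : r*φ = c := by
    by_contra hne
    have hlt : c < r*φ := lt_of_le_of_ne hcleC (Ne.symm hne)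
    have hprod : 0 < ((n:ℝ)-2*p)*hh*(r*φ - c) :=
      mul_pos (mul_pos hn2p hhpos) (sub_pos.mpr hlt)
    linarith only [hFz, hsumle, heq2, hC2, hc2, hprod]
  have hT0 : T = 0 := by
    have h1 : (r*φ)^2 = c^2 := by rw [hCeqc]
    have hr2pos : (0:ℝ) < r^2 := pow_pos hrpos 2
    have h2 : r^2 * T = 0 := by linarith only [hC2, hc2, h1]
    rcases mul_eq_zero.mp h2 with h3 | h3
    · exact absurd h3 (ne_of_gt hr2pos)
    · exact h3
  -- all other vectors vanish
  have hQj0 : ∀ j ∈ Finset.univ.erase z, ∑ i, (k j i)^2 = 0 := by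
    intro j hjm
    have := (Finset.sum_eq_zero_iff_of_nonneg
      (fun j _ => Finset.sum_nonneg fun i _ => sq_nonneg (k j i))).mp (hTdef ▸ hT0)
    exact this j hjm
  have hkj0 : ∀ j : Fin m, (j:ℕ) ≠ 0 → ∀ i, k j i = 0 := by
    intro j hjne0 i
    have hjm : j ∈ Finset.univ.erase z := Finset.mem_erase.mpr
      ⟨fun hcon => hjne0 (by rw [hcon, hzdef]), Finset.mem_univ j⟩
    have := (Finset.sum_eq_zero_iff_of_nonneg
      (fun i _ => sq_nonneg (k j i))).mp (hQj0 j hjm) i (Finset.mem_univ i)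
    exact (pow_eq_zero_iff two_ne_zero).mp this
  refine ⟨hkj0, ?_⟩
  -- the erased sum of infima vanishes
  obtain ⟨a1, ha1⟩ := id hNne
  have hsumerase0 : ∑ j ∈ Finset.univ.erase z, F j = 0 := by
    apply Finset.sum_eq_zero
    intro j hjm
    have hz0 : ∀ a : Finset (Fin n), (∑ i ∈ a, k j i) * (∑ i ∈ aᶜ, k j i) = 0 := by
      intro a
      have : ∀ i, k j i = 0 := hkj0 j (hjne j hjm)
      simp [this]
    rw [hF j]
    refine le_antisymm ?_ ?_
    · exact (Finset.inf'_le _ ha1).trans_eq (hz0 a1)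
    · exact Finset.le_inf' _ _ fun a _ => (hz0 a).ge
  have hFzeq : F z = (n:ℝ)*r^2*hh^2 - ((n:ℝ)-2*p)*hh*c - c^2 := by
    rw [hsumerase0, add_zero] at heq2
    rw [heq2, hCeqc]
  -- extract a minimizing subset
  obtain ⟨a0, ha0mem, ha0inf⟩ := Finset.exists_mem_eq_inf' hNne
    (fun a => (∑ i ∈ a, k z i) * (∑ i ∈ aᶜ, k z i))
  have ha0 : a0.card = p := by rwa [Finset.mem_powersetCard_univ] at ha0mem
  have hvala0 : (∑ i ∈ a0, k z i) * (∑ i ∈ a0ᶜ, k z i)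
      = (n:ℝ)*r^2*hh^2 - ((n:ℝ)-2*p)*hh*c - c^2 := by
    rw [← ha0inf, ← hFzeq, hF z]
  -- equality analysis at a0
  have hEcs := cs_aux e1 hesum a0
  rw [ha0, hEa a0 ha0, ← hP1def] at hEcs
  have hE2 : ((∑ i ∈ a0, k z i) - p*hh)^2 ≤ c^2 := by
    rw [hc2, hr2, div_mul_eq_mul_div, le_div_iff₀ hn0]
    linarith only [hEcs]
  obtain ⟨hElow, hEhigh⟩ := abs_le_of_sq_le_sq' hE2 hcnn
  have hval : (∑ i ∈ a0, k z i) * (∑ i ∈ a0ᶜ, k z i)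
      = (n:ℝ)*r^2*hh^2 + ((n:ℝ)-2*p)*hh*((∑ i ∈ a0, k z i) - p*hh)
        - ((∑ i ∈ a0, k z i) - p*hh)^2 := by
    rw [hcompl0 a0, ← hnr]; ring
  set E0 : ℝ := (∑ i ∈ a0, k z i) - p*hh with hE0def
  have hfac : (E0 + c) * (((n:ℝ)-2*p)*hh + (c - E0)) = 0 := by
    have h1 : (n:ℝ)*r^2*hh^2 + ((n:ℝ)-2*p)*hh*E0 - E0^2
        = (n:ℝ)*r^2*hh^2 - ((n:ℝ)-2*p)*hh*c - c^2 := by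
      rw [← hval, hvala0]
    linear_combination h1
  have hE0eq : E0 = -c := by
    rcases mul_eq_zero.mp hfac with h1 | h1
    · linarith only [h1]
    · exfalso
      have h2 : 0 < ((n:ℝ)-2*p)*hh + (c - E0) := by
        have := mul_pos hn2p hhpos
        linarith only [this, hEhigh]
      linarith only [h1, h2]
  have hE0sq : E0^2 * n = (p:ℝ)*((n:ℝ)-p)*P1 := by
    have h1 : E0^2 = c^2 := by rw [hE0eq]; ring
    rw [h1, hc2, hr2]
    field_simp
  refine ⟨a0, ha0, hh + E0/p, hh - E0/((n:ℝ)-p), ?_, ?_⟩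
  all_goals {
    have hexpand : ∀ (s : Finset (Fin n)) (cst : ℝ),
        ∑ i ∈ s, (k z i - cst)^2
          = (∑ i ∈ s, (k z i)^2) - 2*cst*(∑ i ∈ s, k z i) + (s.card : ℝ) * cst^2 := by
      intro s cst
      have h1 : ∀ i ∈ s, (k z i - cst)^2 = (k z i)^2 - 2*cst*(k z i) + cst^2 :=
        fun i _ => by ring
      rw [Finset.sum_congr rfl h1, Finset.sum_add_distrib, Finset.sum_sub_distrib,
        ← Finset.mul_sum, Finset.sum_const, nsmul_eq_mul]
    have hcard0c : ((a0ᶜ).card : ℝ) = (n:ℝ) - p := by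
      rw [Finset.card_compl, Fintype.card_fin, ha0, Nat.cast_sub hplt.le]
    have hsums : ∑ i ∈ a0, k z i = E0 + p*hh := by rw [hE0def]; ring
    have hsumc : ∑ i ∈ a0ᶜ, k z i = (n:ℝ)*hh - (E0 + p*hh) := by
      rw [hcompl0 a0, hsums]
    have hsqtot : (∑ i ∈ a0, (k z i)^2) + (∑ i ∈ a0ᶜ, (k z i)^2) = P1 + n*hh^2 := by
      rw [Finset.sum_add_sum_compl]
      linarith only [hP1eq]
    have hQ1c : (∑ i ∈ a0ᶜ, (k z i)^2) = P1 + n*hh^2 - (∑ i ∈ a0, (k z i)^2) := by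
      linarith only [hsqtot]
    have htotal : (∑ i ∈ a0, (k z i - (hh + E0/p))^2)
        + (∑ i ∈ a0ᶜ, (k z i - (hh - E0/((n:ℝ)-p)))^2) = 0 := by
      have hE' : E0^2 * ((p:ℝ) + ((n:ℝ) - p)) = (p:ℝ) * ((n:ℝ)-p) * P1 := by
        linear_combination hE0sq
      have halg := alg_aux (p:ℝ) ((n:ℝ)-p) hp0 hnp E0 hh P1 (∑ i ∈ a0, (k z i)^2) hE'
      rw [hexpand a0 _, hexpand a0ᶜ _, hsums, hsumc, hcard0c, ha0, hQ1c]
      linear_combination halg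
    have hnn1 : (0:ℝ) ≤ ∑ i ∈ a0, (k z i - (hh + E0/p))^2 :=
      Finset.sum_nonneg fun i _ => sq_nonneg _
    have hnn2 : (0:ℝ) ≤ ∑ i ∈ a0ᶜ, (k z i - (hh - E0/((n:ℝ)-p)))^2 :=
      Finset.sum_nonneg fun i _ => sq_nonneg _
    have h10 : ∑ i ∈ a0, (k z i - (hh + E0/p))^2 = 0 := by linarith only [htotal, hnn1, hnn2]
    have h20 : ∑ i ∈ a0ᶜ, (k z i - (hh - E0/((n:ℝ)-p)))^2 = 0 := by
      linarith only [htotal, hnn1, hnn2]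
    first
    | · intro i hi
        have h3 := (Finset.sum_eq_zero_iff_of_nonneg (fun i _ => sq_nonneg _)).mp h10 i hi
        have h4 := (pow_eq_zero_iff two_ne_zero).mp h3
        linarith only [h4]
    | · intro i hi
        have him : i ∈ a0ᶜ := Finset.mem_compl.mpr hi
        have h3 := (Finset.sum_eq_zero_iff_of_nonneg (fun i _ => sq_nonneg _)).mp h20 i him
        have h4 := (pow_eq_zero_iff two_ne_zero).mp h3
        linarith only [h4]
  }
end

section
/- Let n ≥ 3 and p ≤ q be integers with 1 ≤ p and 2q ≤ n, and let t ≥ 0 and c be real numbers with t² + c ≥ 0. Then a(n,p,t,c) ≤ a(n,q,t,c). -/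
/-- Largest root of `x^2 + b x - d`. -/
noncomputable def rr (b d : ℝ) : ℝ := (-b + Real.sqrt (b ^ 2 + 4 * d)) / 2

lemma rr_nonneg (b d : ℝ) (hb : 0 ≤ b) (hd : 0 ≤ d) : 0 ≤ rr b d := by
  have h1 : Real.sqrt (b ^ 2) ≤ Real.sqrt (b ^ 2 + 4 * d) :=
    Real.sqrt_le_sqrt (by linarith)
  rw [Real.sqrt_sq hb] at h1
  unfold rr; linarith

lemma rr_anti (b₁ b₂ d : ℝ) (hb : 0 ≤ b₂) (hle : b₂ ≤ b₁) (hd : 0 ≤ d) :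
    rr b₁ d ≤ rr b₂ d := by
  have h2 : b₂ ≤ Real.sqrt (b₂ ^ 2 + 4 * d) := by
    have h1 : Real.sqrt (b₂ ^ 2) ≤ Real.sqrt (b₂ ^ 2 + 4 * d) :=
      Real.sqrt_le_sqrt (by linarith)
    rwa [Real.sqrt_sq hb] at h1
  have hS2 : (Real.sqrt (b₂ ^ 2 + 4 * d)) ^ 2 = b₂ ^ 2 + 4 * d :=
    Real.sq_sqrt (by positivity)
  have key : b₁ ^ 2 + 4 * d ≤ ((b₁ - b₂) + Real.sqrt (b₂ ^ 2 + 4 * d)) ^ 2 := by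
    nlinarith [mul_le_mul_of_nonneg_left h2 (sub_nonneg.mpr hle)]
  have h3 : Real.sqrt (b₁ ^ 2 + 4 * d) ≤ (b₁ - b₂) + Real.sqrt (b₂ ^ 2 + 4 * d) := by
    have h4 := Real.sqrt_le_sqrt key
    rwa [Real.sqrt_sq (by nlinarith : (0:ℝ) ≤ (b₁ - b₂) + Real.sqrt (b₂ ^ 2 + 4 * d))] at h4
  unfold rr; linarith

lemma pinchA_eq (n p : ℕ) (hp : 1 ≤ p) (h2p : 2 * p ≤ n) (t c : ℝ) (ht : 0 ≤ t)
    (htc : 0 ≤ t ^ 2 + c) :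
    pinchA n p t c = (n : ℝ) * t ^ 2 +
      (rr ((n : ℝ) * ((n : ℝ) - 2 * (p : ℝ)) * t /
            Real.sqrt ((n : ℝ) * ((p : ℝ) * ((n : ℝ) - (p : ℝ)))))
          ((n : ℝ) * (t ^ 2 + c))) ^ 2 := by
  have hp' : (1 : ℝ) ≤ (p : ℝ) := by exact_mod_cast hp
  have h2p' : 2 * (p : ℝ) ≤ (n : ℝ) := by exact_mod_cast h2p
  set n' : ℝ := (n : ℝ) with hn_def
  set p' : ℝ := (p : ℝ) with hp_def
  have hn0 : 0 < n' := by linarith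
  set s : ℝ := p' * (n' - p') with hs_def
  have hs : 0 < s := by rw [hs_def]; nlinarith
  have hns : 0 < n' * s := mul_pos hn0 hs
  set R : ℝ := Real.sqrt (n' * s) with hR_def
  have hR : 0 < R := Real.sqrt_pos.mpr hns
  have hRsq : R ^ 2 = n' * s := Real.sq_sqrt hns.le
  set b : ℝ := n' * (n' - 2 * p') * t / R with hb_def
  set d : ℝ := n' * (t ^ 2 + c) with hd_def
  have hXarg : 0 ≤ n' ^ 2 * t ^ 2 + 4 * s * c := by
    rw [hs_def]
    nlinarith [sq_nonneg (n' - 2 * p'), mul_nonneg hs.le htc, sq_nonneg t,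
      mul_nonneg (mul_nonneg (by linarith : (0:ℝ) ≤ p') (by linarith : (0:ℝ) ≤ n' - p')) htc,
      mul_nonneg (sq_nonneg (n' - 2 * p')) (sq_nonneg t)]
  set X : ℝ := Real.sqrt (n' ^ 2 * t ^ 2 + 4 * s * c) with hX_def
  have hXsq : X ^ 2 = n' ^ 2 * t ^ 2 + 4 * s * c := Real.sq_sqrt hXarg
  have hs0 : s ≠ 0 := ne_of_gt hs
  have hn0' : n' ≠ 0 := ne_of_gt hn0
  have hR0 : R ≠ 0 := ne_of_gt hR
  clear_value X d b R s p' n'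
  -- b² in explicit form
  have hb2 : b ^ 2 = n' * (n' - 2 * p') ^ 2 * t ^ 2 / s := by
    rw [hb_def, div_pow, hRsq]
    field_simp
  have h4s : (n' - 2 * p') ^ 2 = n' ^ 2 - 4 * s := by rw [hs_def]; ring
  have hsum : b ^ 2 + 4 * d = n' / s * (n' ^ 2 * t ^ 2 + 4 * s * c) := by
    rw [hb2, h4s, hd_def]
    field_simp
    ring
  have hsqrt_sum : Real.sqrt (b ^ 2 + 4 * d) = Real.sqrt (n' / s) * X := by
    rw [hsum, hX_def, Real.sqrt_mul (div_nonneg hn0.le hs.le)]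
  have hmix : Real.sqrt (n' / s) * R = n' := by
    rw [hR_def, ← Real.sqrt_mul (div_nonneg hn0.le hs.le)]
    rw [show n' / s * (n' * s) = n' ^ 2 by field_simp]
    exact Real.sqrt_sq hn0.le
  have hbS : b * Real.sqrt (b ^ 2 + 4 * d) = n' * (n' - 2 * p') * t * X / s := by
    rw [hsqrt_sum, hb_def]
    rw [show n' * (n' - 2 * p') * t / R * (Real.sqrt (n' / s) * X)
        = n' * (n' - 2 * p') * t * X * (Real.sqrt (n' / s) * R) / (R * R) by
      field_simp]
    rw [hmix, show R * R = n' * s by rw [← hRsq]; ring]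
    field_simp
  have hS2 : (Real.sqrt (b ^ 2 + 4 * d)) ^ 2 = b ^ 2 + 4 * d := by
    refine Real.sq_sqrt ?_
    rw [hsum]
    exact mul_nonneg (div_nonneg hn0.le hs.le) hXarg
  have hrr : (rr b d) ^ 2 = b ^ 2 / 2 + d - b * Real.sqrt (b ^ 2 + 4 * d) / 2 := by
    unfold rr
    linear_combination hS2 / 4
  have habs : |n' - 2 * p'| = n' - 2 * p' := abs_of_nonneg (by linarith)
  have hXmatch : Real.sqrt (n' ^ 2 * t ^ 2 + 4 * p' * (n' - p') * c) = X := by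
    rw [hX_def]; congr 1; rw [hs_def]; ring
  have hpinch : pinchA n p t c
      = n' * c + n' ^ 3 * t ^ 2 / (2 * s) - n' * (n' - 2 * p') * t * X / (2 * s) := by
    rw [pinchA, ← hn_def, ← hp_def, habs, hXmatch,
      show 2 * p' * (n' - p') = 2 * s by rw [hs_def]; ring]
    ring
  rw [hpinch, hrr, hbS, hb2, h4s, hd_def]
  field_simp
  ring

theorem pinchA_mono (n p q : ℕ) (hn : 3 ≤ n) (hp : 1 ≤ p) (hpq : p ≤ q) (hq : 2 * q ≤ n)
    (t c : ℝ) (ht : 0 ≤ t) (htc : 0 ≤ t ^ 2 + c) :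
    pinchA n p t c ≤ pinchA n q t c := by
  have h2p : 2 * p ≤ n := by omega
  have hq1 : 1 ≤ q := le_trans hp hpq
  rw [pinchA_eq n p hp h2p t c ht htc, pinchA_eq n q hq1 hq t c ht htc]
  have hp' : (1 : ℝ) ≤ (p : ℝ) := by exact_mod_cast hp
  have hpq' : (p : ℝ) ≤ (q : ℝ) := by exact_mod_cast hpq
  have hq' : 2 * (q : ℝ) ≤ (n : ℝ) := by exact_mod_cast hq
  have hsp : 0 < (p : ℝ) * ((n : ℝ) - (p : ℝ)) := by nlinarith
  have hsq : 0 < (q : ℝ) * ((n : ℝ) - (q : ℝ)) := by nlinarith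
  have hss : (p : ℝ) * ((n : ℝ) - (p : ℝ)) ≤ (q : ℝ) * ((n : ℝ) - (q : ℝ)) := by nlinarith
  have hd : 0 ≤ (n : ℝ) * (t ^ 2 + c) := by positivity
  have hRp : 0 < Real.sqrt ((n : ℝ) * ((p : ℝ) * ((n : ℝ) - (p : ℝ)))) :=
    Real.sqrt_pos.mpr (by nlinarith)
  have hRq : 0 < Real.sqrt ((n : ℝ) * ((q : ℝ) * ((n : ℝ) - (q : ℝ)))) :=
    Real.sqrt_pos.mpr (by nlinarith)
  have hRle : Real.sqrt ((n : ℝ) * ((p : ℝ) * ((n : ℝ) - (p : ℝ))))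
      ≤ Real.sqrt ((n : ℝ) * ((q : ℝ) * ((n : ℝ) - (q : ℝ)))) :=
    Real.sqrt_le_sqrt (by nlinarith)
  have hbq0 : 0 ≤ (n : ℝ) * ((n : ℝ) - 2 * (q : ℝ)) * t := by
    have : (0:ℝ) ≤ (n : ℝ) - 2 * (q : ℝ) := by linarith
    positivity
  have hbp0 : 0 ≤ (n : ℝ) * ((n : ℝ) - 2 * (p : ℝ)) * t := by
    have : (0:ℝ) ≤ (n : ℝ) - 2 * (p : ℝ) := by linarith
    positivity
  have hnum : (n : ℝ) * ((n : ℝ) - 2 * (q : ℝ)) * t ≤ (n : ℝ) * ((n : ℝ) - 2 * (p : ℝ)) * t := by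
    nlinarith [mul_nonneg (mul_nonneg (by positivity : (0:ℝ) ≤ (n:ℝ)) (sub_nonneg.mpr hpq')) ht]
  have hble : (n : ℝ) * ((n : ℝ) - 2 * (q : ℝ)) * t /
        Real.sqrt ((n : ℝ) * ((q : ℝ) * ((n : ℝ) - (q : ℝ))))
      ≤ (n : ℝ) * ((n : ℝ) - 2 * (p : ℝ)) * t /
        Real.sqrt ((n : ℝ) * ((p : ℝ) * ((n : ℝ) - (p : ℝ)))) :=
    div_le_div₀ hbp0 hnum hRp hRle
  have hbq : 0 ≤ (n : ℝ) * ((n : ℝ) - 2 * (q : ℝ)) * t /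
      Real.sqrt ((n : ℝ) * ((q : ℝ) * ((n : ℝ) - (q : ℝ)))) := by positivity
  have hbp : 0 ≤ (n : ℝ) * ((n : ℝ) - 2 * (p : ℝ)) * t /
      Real.sqrt ((n : ℝ) * ((p : ℝ) * ((n : ℝ) - (p : ℝ)))) := by positivity
  have hr := rr_anti _ _ _ hbq hble hd
  have hr0 := rr_nonneg _ ((n : ℝ) * (t ^ 2 + c)) hbp hd
  have := pow_le_pow_left₀ hr0 hr 2
  linarith
end
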